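/- Let P be an n × m matrix over 𝔽₂ such that |P_α| is even for every α and |P_α ∧ P_β| is even for all α, β, and let Q be an n × m'' Boolean matrix with m, m'' ≥ 1. Then there exists a Boolean matrix W' with strictly fewer than m + m'' columns such that the concatenation W = [P Q] and W' satisfy |W'_α ∧ W'_β ∧ W'_γ| ≡ |W_α ∧ W_β ∧ W_γ| (mod 2) for all α ≤ β ≤ γ. -/
import Mathlib


/-- Hamming weight of a Boolean vector. -/
def wt {m : ℕ} (v : Fin m → Bool) : ℕ :=
  (Finset.univ.filter (fun i => v i = true)).card

lemma wt_cast {m : ℕ} (v : Fin m → Bool) :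
    ((wt v : ℕ) : ZMod 2) = ∑ i, (if v i = true then (1 : ZMod 2) else 0) := by
  unfold wt
  rw [Finset.card_filter]
  push_cast
  rfl

lemma sum_cube_shift {k : ℕ} (a b c : Fin k → ZMod 2) (x y w : ZMod 2) :
    ∑ j, (a j + x) * (b j + y) * (c j + w)
      = ∑ j, a j * b j * c j + w * ∑ j, a j * b j + y * ∑ j, a j * c j
        + x * ∑ j, b j * c j + (y * w) * ∑ j, a j + (x * w) * ∑ j, b j
        + (x * y) * ∑ j, c j + (x * y * w) * (k : ZMod 2) := by
  have hk : (k : ZMod 2) = ∑ _j : Fin k, (1 : ZMod 2) := by simp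
  rw [hk]
  simp only [Finset.mul_sum, ← Finset.sum_add_distrib]
  exact Finset.sum_congr rfl (fun j _ => by ring)

theorem stmt_13 (n m m'' : ℕ) (hm : 1 ≤ m) (hm'' : 1 ≤ m'')
    (P : Fin n → Fin m → Bool) (Q : Fin n → Fin m'' → Bool)
    (hProw : ∀ α, wt (fun i => P α i) % 2 = 0)
    (hPpair : ∀ α β, wt (fun i => P α i && P β i) % 2 = 0)
    (W : Fin n → Fin (m + m'') → Bool)
    (hW : ∀ α j, W α j = Fin.addCases (P α) (Q α) j) :
    ∃ m' : ℕ, m' < m + m'' ∧ ∃ W' : Fin n → Fin m' → Bool,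
      ∀ α β γ : Fin n, α ≤ β → β ≤ γ →
        wt (fun i => W' α i && W' β i && W' γ i) % 2 =
        wt (fun i => W α i && W β i && W γ i) % 2 := by
  obtain ⟨k, rfl⟩ : ∃ k, m = k + 1 := ⟨m - 1, by omega⟩
  obtain ⟨l, rfl⟩ : ∃ l, m'' = l + 1 := ⟨m'' - 1, by omega⟩
  -- notation for the ZMod 2 value of a Boolean
  set F : Bool → ZMod 2 := fun b => if b = true then 1 else 0 with hF
  have hand : ∀ a b : Bool, F (a && b) = F a * F b := by decide
  have hxor : ∀ a b : Bool, F (xor a b) = F a + F b := by decide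
  -- the update vector
  set z : Fin n → Bool := fun α => xor (P α (Fin.last k)) (Q α (Fin.last l)) with hzdef
  refine ⟨k + (l + 1), by omega,
    fun α => Fin.addCases (fun j : Fin k => xor (P α j.castSucc) (z α))
      (Fin.snoc (fun j : Fin l => Q α j.castSucc) (decide ((k + 1) % 2 = 1) && z α)), ?_⟩
  intro α β γ _ _
  refine (ZMod.natCast_eq_natCast_iff _ _ 2).mp ?_
  rw [wt_cast, wt_cast]
  -- hypotheses in ZMod 2 form
  have hcast0 : ∀ a : ℕ, a % 2 = 0 → ((a : ℕ) : ZMod 2) = 0 := fun a ha =>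
    (ZMod.natCast_eq_zero_iff a 2).mpr (Nat.dvd_of_mod_eq_zero ha)
  have hT : ∀ ρ, ∑ j : Fin k, F (P ρ j.castSucc) = F (P ρ (Fin.last k)) := by
    intro ρ
    have h0 : ∑ j : Fin (k + 1), F (P ρ j) = 0 := by
      rw [← wt_cast (fun i => P ρ i)]; exact hcast0 _ (hProw ρ)
    rw [Fin.sum_univ_castSucc] at h0
    have : ∀ u v : ZMod 2, u + v = 0 → u = v := by decide
    exact this _ _ h0
  have hS : ∀ ρ σ, ∑ j : Fin k, F (P ρ j.castSucc) * F (P σ j.castSucc)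
      = F (P ρ (Fin.last k)) * F (P σ (Fin.last k)) := by
    intro ρ σ
    have h0 : ∑ j : Fin (k + 1), (if (P ρ j && P σ j) = true then (1 : ZMod 2) else 0) = 0 := by
      rw [← wt_cast (fun i => P ρ i && P σ i)]; exact hcast0 _ (hPpair ρ σ)
    have h0' : ∑ j : Fin (k + 1), F (P ρ j) * F (P σ j) = 0 := by
      rw [← h0]; exact Finset.sum_congr rfl fun j _ => (hand _ _).symm
    rw [Fin.sum_univ_castSucc] at h0'
    have : ∀ u v : ZMod 2, u + v = 0 → u = v := by decide
    exact this _ _ h0'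
  -- value of the parity bit
  have hc : F (decide ((k + 1) % 2 = 1)) = (k : ZMod 2) + 1 := by
    have hk2 : (k : ZMod 2) = ((k % 2 : ℕ) : ZMod 2) := (ZMod.natCast_mod k 2).symm
    rcases Nat.mod_two_eq_zero_or_one k with h | h
    · have : (k + 1) % 2 = 1 := by omega
      rw [this, hk2, h]; simp [hF]
    · have : (k + 1) % 2 = 0 := by omega
      rw [this, hk2, h]; push_cast; simp [hF]; decide
  -- expand both sides
  simp only [hW]
  show ∑ i, F _ = ∑ i, F _
  simp only [hand]
  conv_lhs => rw [Fin.sum_univ_add]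
  conv_rhs => rw [Fin.sum_univ_add]
  simp only [Fin.addCases_left, Fin.addCases_right]
  simp only [Fin.sum_univ_castSucc, Fin.snoc_castSucc, Fin.snoc_last]
  simp only [hand, hxor, hzdef, hc]
  rw [sum_cube_shift (fun j => F (P α j.castSucc)) (fun j => F (P β j.castSucc))
    (fun j => F (P γ j.castSucc)) (F (P α (Fin.last k)) + F (Q α (Fin.last l)))
    (F (P β (Fin.last k)) + F (Q β (Fin.last l)))
    (F (P γ (Fin.last k)) + F (Q γ (Fin.last l)))]
  rw [hT, hT, hT, hS, hS, hS]
  generalize (∑ j : Fin k, F (P α j.castSucc) * F (P β j.castSucc) * F (P γ j.castSucc)) = S3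
  generalize (∑ j : Fin l, F (Q α j.castSucc) * F (Q β j.castSucc) * F (Q γ j.castSucc)) = T3
  generalize ((k : ℕ) : ZMod 2) = K
  generalize F (P α (Fin.last k)) = pa
  generalize F (P β (Fin.last k)) = pb
  generalize F (P γ (Fin.last k)) = pc
  generalize F (Q α (Fin.last l)) = qa
  generalize F (Q β (Fin.last l)) = qb
  generalize F (Q γ (Fin.last l)) = qc
  revert S3 T3 K pa pb pc qa qb qc
  decide
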